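/- The folding domain function ĝ is differentiable on [α,β] and its derivative satisfies ĝ′(x) = |g′(x)| for every x ∈ [α,β]. -/

import Mathlib

/-- The partial sums `m_j = |λ_1| + ⋯ + |λ_j|` of the absolute increments
`λ_i = g(α_i) - g(α_{i-1})`. -/
noncomputable def mseq (g : ℝ → ℝ) (a : ℕ → ℝ) : ℕ → ℝ :=
  fun j => ∑ i ∈ Finset.range j, |g (a (i + 1)) - g (a i)|

theorem stmt7
    (α β : ℝ) (hαβ : α < β)
    (k : ℕ) (hk : 0 < k)
    (a : ℕ → ℝ) (ha0 : a 0 = α) (hak : a k = β)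
    (hamono : ∀ j < k, a j < a (j + 1))
    (g g' : ℝ → ℝ)
    (hderiv : ∀ x ∈ Set.Icc α β, HasDerivWithinAt g (g' x) (Set.Icc α β) x)
    (hg'cont : ContinuousOn g' (Set.Icc α β))
    (hpiece : ∀ j, 1 ≤ j → j ≤ k →
      StrictMonoOn g (Set.Ioo (a (j - 1)) (a j)) ∨ StrictAntiOn g (Set.Ioo (a (j - 1)) (a j)))
    (hg'ne : ∀ j, 1 ≤ j → j ≤ k → ∀ x ∈ Set.Ioo (a (j - 1)) (a j), g' x ≠ 0)
    (hcrit : ∀ j, 0 < j → j < k → g' (a j) = 0 ∧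
      ((∀ᶠ x in nhdsWithin (a j) (Set.Icc α β \ {a j}), g x < g (a j)) ∨
       (∀ᶠ x in nhdsWithin (a j) (Set.Icc α β \ {a j}), g (a j) < g x)))
    (G : ℝ → ℝ)
    (hG : ∀ j, 1 ≤ j → j ≤ k → ∀ x ∈ Set.Icc (a (j - 1)) (a j),
      G x = mseq g a (j - 1) + |g x - g (a (j - 1))|)
 :
    ∀ x ∈ Set.Icc α β, HasDerivWithinAt G (|g' x|) (Set.Icc α β) x := by
  classical
  have amle : ∀ i j : ℕ, i ≤ j → j ≤ k → a i ≤ a j := by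
    intro i j hij hjk
    induction j with
    | zero => exact le_of_eq (congrArg a (Nat.le_zero.mp hij))
    | succ n ih =>
      rcases Nat.eq_or_lt_of_le hij with h | h
      · exact h ▸ le_refl _
      · exact le_trans (ih (Nat.lt_succ_iff.mp h) (le_trans (Nat.le_succ n) hjk))
          (le_of_lt (hamono n (Nat.lt_of_succ_le hjk)))
  have key : ∀ j, 1 ≤ j → j ≤ k → ∀ x ∈ Set.Icc (a (j-1)) (a j),
      HasDerivWithinAt G (|g' x|) (Set.Icc (a (j-1)) (a j)) x := by
    intro j hj1 hjk
    set u := a (j-1) with hu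
    set v := a j with hv
    have huv : u < v := by
      have := hamono (j-1) (by omega)
      rwa [Nat.sub_add_cancel hj1] at this
    have hαu : α ≤ u := ha0 ▸ amle 0 (j-1) (Nat.zero_le _) (by omega)
    have hvβ : v ≤ β := hak ▸ amle j k hjk le_rfl
    have hsub : Set.Icc u v ⊆ Set.Icc α β := by
      intro y hy
      exact ⟨le_trans hαu hy.1, le_trans hy.2 hvβ⟩
    have hIoo : Set.Ioo u v ⊆ Set.Icc α β := Set.Ioo_subset_Icc_self.trans hsub
    -- constant sign of g' on the open interval
    have hsigncase : (∀ x ∈ Set.Ioo u v, 0 < g' x) ∨ (∀ x ∈ Set.Ioo u v, g' x < 0) := by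
      by_contra hcon
      push_neg at hcon
      obtain ⟨⟨x, hx, hx0⟩, ⟨y, hy, hy0⟩⟩ := hcon
      have hxneg : g' x < 0 := lt_of_le_of_ne hx0 (hg'ne j hj1 hjk x hx)
      have hypos : 0 < g' y := hy0.lt_of_ne' (hg'ne j hj1 hjk y hy)
      rcases lt_trichotomy x y with h | h | h
      · have hcont : ContinuousOn g' (Set.Icc x y) := hg'cont.mono (fun z hz =>
          hIoo ⟨lt_of_lt_of_le hx.1 hz.1, lt_of_le_of_lt hz.2 hy.2⟩)
        obtain ⟨z, hz, hz0⟩ := intermediate_value_Ioo h.le hcont ⟨hxneg, hypos⟩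
        exact hg'ne j hj1 hjk z ⟨lt_trans hx.1 hz.1, lt_trans hz.2 hy.2⟩ hz0
      · subst h; exact absurd hypos (not_lt.mpr hxneg.le)
      · have hcont : ContinuousOn g' (Set.Icc y x) := hg'cont.mono (fun z hz =>
          hIoo ⟨lt_of_lt_of_le hy.1 hz.1, lt_of_le_of_lt hz.2 hx.2⟩)
        obtain ⟨z, hz, hz0⟩ := intermediate_value_Ioo' h.le hcont ⟨hxneg, hypos⟩
        exact hg'ne j hj1 hjk z ⟨lt_trans hy.1 hz.1, lt_trans hz.2 hx.2⟩ hz0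
    obtain ⟨ε, hε1, hεpos⟩ : ∃ ε : ℝ, (ε = 1 ∨ ε = -1) ∧ ∀ x ∈ Set.Ioo u v, 0 < ε * g' x := by
      rcases hsigncase with h | h
      · exact ⟨1, Or.inl rfl, fun x hx => by simpa using h x hx⟩
      · exact ⟨-1, Or.inr rfl, fun x hx => by simpa using h x hx⟩
    have hgc : ContinuousOn g (Set.Icc α β) := fun x hx => (hderiv x hx).continuousWithinAt
    -- nonnegativity of ε * g' on the closed interval
    have hε0 : ∀ x ∈ Set.Icc u v, 0 ≤ ε * g' x := by
      intro x hx
      have hcl : x ∈ closure (Set.Ioo u v) := by rw [closure_Ioo huv.ne]; exact hx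
      haveI hne : (nhdsWithin x (Set.Ioo u v)).NeBot := mem_closure_iff_nhdsWithin_neBot.mp hcl
      have htend : Filter.Tendsto (fun y => ε * g' y) (nhdsWithin x (Set.Ioo u v))
          (nhds (ε * g' x)) :=
        ((continuousOn_const.mul hg'cont) x (hsub hx)).mono hIoo
      exact ge_of_tendsto htend
        (Filter.eventually_of_mem self_mem_nhdsWithin (fun y hy => (hεpos y hy).le))
    -- strict monotonicity of ε • g on the closed interval
    have hmono : StrictMonoOn (fun y => ε * g y) (Set.Icc u v) := by
      apply strictMonoOn_of_deriv_pos (convex_Icc u v)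
        ((continuousOn_const.mul hgc).mono hsub)
      intro x hx
      rw [interior_Icc] at hx
      have hnb : Set.Icc α β ∈ nhds x :=
        Icc_mem_nhds (lt_of_le_of_lt hαu hx.1) (lt_of_lt_of_le hx.2 hvβ)
      have hd : HasDerivAt (fun y => ε * g y) (ε * g' x) x :=
        ((hderiv x (hIoo hx)).const_mul ε).hasDerivAt hnb
      show 0 < deriv (fun y => ε * g y) x
      rw [hd.deriv]
      exact hεpos x hx
    have hεabs : |ε| = 1 := by rcases hε1 with h | h <;> simp [h]
    have hsign : ∀ x ∈ Set.Icc u v, |g x - g u| = ε * (g x - g u) := by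
      intro x hx
      have h0 : 0 ≤ ε * (g x - g u) := by
        have : ε * g u ≤ ε * g x := by
          rcases eq_or_lt_of_le hx.1 with h | h
          · rw [← h]
          · exact (hmono (Set.left_mem_Icc.mpr huv.le) hx h).le
        linarith
      calc |g x - g u| = |ε * (g x - g u)| := by rw [abs_mul, hεabs, one_mul]
        _ = ε * (g x - g u) := abs_of_nonneg h0
    have hsign' : ∀ x ∈ Set.Icc u v, |g' x| = ε * g' x := by
      intro x hx
      calc |g' x| = |ε * g' x| := by rw [abs_mul, hεabs, one_mul]
        _ = ε * g' x := abs_of_nonneg (hε0 x hx)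
    intro x hx
    have hφ : HasDerivWithinAt (fun y => mseq g a (j-1) + ε * (g y - g u)) (ε * g' x)
        (Set.Icc α β) x :=
      (((hderiv x (hsub hx)).sub_const (g u)).const_mul ε).const_add _
    have hGeq : ∀ y ∈ Set.Icc u v, G y = mseq g a (j-1) + ε * (g y - g u) := fun y hy => by
      rw [hG j hj1 hjk y hy, hsign y hy]
    have hres := (hφ.mono hsub).congr hGeq (hGeq x hx)
    rw [hsign' x hx]
    exact hres
  intro x hx
  have hP0 : a 0 ≤ x := ha0 ▸ hx.1
  set i := Nat.findGreatest (fun i => a i ≤ x) k with hi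
  have hik : i ≤ k := Nat.findGreatest_le k
  have hPi : a i ≤ x := Nat.findGreatest_spec (P := fun i => a i ≤ x) (Nat.zero_le k) hP0
  rcases eq_or_lt_of_le hik with hik' | hik'
  · -- x = β
    have hxβ : x = β := le_antisymm hx.2 (hak ▸ hik' ▸ hPi)
    have hxmem : x ∈ Set.Icc (a (k-1)) (a k) := by
      constructor
      · rw [hxβ, ← hak]; exact amle (k-1) k (Nat.sub_le k 1) le_rfl
      · rw [hxβ, ← hak]
    refine (key k hk le_rfl x hxmem).mono_of_mem_nhdsWithin ?_
    rw [mem_nhdsWithin]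
    refine ⟨Set.Ioi (a (k-1)), isOpen_Ioi, ?_, ?_⟩
    · rw [hxβ, ← hak]
      have := hamono (k-1) (by omega)
      rwa [Nat.sub_add_cancel hk] at this
    · intro y hy
      exact ⟨hy.1.le, hak ▸ hy.2.2⟩
  · -- i < k
    have hlt : x < a (i+1) := by
      have := Nat.findGreatest_is_greatest (P := fun i => a i ≤ x)
        (Nat.lt_succ_self i) (by omega)
      exact lt_of_not_ge this
    have hii1 : a i < a (i+1) := hamono i hik'
    rcases eq_or_lt_of_le hPi with heq | hlt2
    · -- x = a i
      rcases Nat.eq_zero_or_pos i with hi0 | hi0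
      · -- x = α
        rw [hi0] at heq hlt
        have hxmem : x ∈ Set.Icc (a 0) (a 1) := ⟨heq.le, hlt.le⟩
        have hkey := key 1 le_rfl hk x (by simpa using hxmem)
        refine hkey.mono_of_mem_nhdsWithin ?_
        rw [mem_nhdsWithin]
        refine ⟨Set.Iio (a 1), isOpen_Iio, by simpa using hlt, ?_⟩
        intro y hy
        simp only [Nat.sub_self]
        exact ⟨ha0 ▸ hy.2.1, hy.1.le⟩
      · -- interior critical point
        have hprev : a (i-1) < a i := by
          have := hamono (i-1) (by omega)
          rwa [Nat.sub_add_cancel hi0] at this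
        have h1 := key i hi0 hik'.le x ⟨hprev.le.trans heq.le, le_of_eq heq.symm⟩
        have h2 := key (i+1) (by omega) hik' x
          (by simpa using (⟨hPi, hlt.le⟩ : x ∈ Set.Icc (a i) (a (i+1))))
        simp only [Nat.add_sub_cancel] at h2
        have hun := h1.union h2
        rw [Set.Icc_union_Icc_eq_Icc hprev.le hii1.le] at hun
        refine hun.mono_of_mem_nhdsWithin ?_
        rw [mem_nhdsWithin]
        refine ⟨Set.Ioo (a (i-1)) (a (i+1)), isOpen_Ioo,
          ⟨heq ▸ hprev, heq ▸ hii1⟩, ?_⟩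
        intro y hy
        exact ⟨hy.1.1.le, hy.1.2.le⟩
    · -- interior of a subinterval
      have hkey := key (i+1) (by omega) hik' x
        (by simpa using (⟨hPi, hlt.le⟩ : x ∈ Set.Icc (a i) (a (i+1))))
      simp only [Nat.add_sub_cancel] at hkey
      exact hkey.mono_of_mem_nhdsWithin
        (mem_nhdsWithin_of_mem_nhds (Icc_mem_nhds hlt2 hlt))
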